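/- The function $\rho : \mathbb{R}^3 \to [0,\infty)$ defined by $\rho(x,y,a) = \frac{4}{\pi}\cdot \frac{x^2+y^2}{\sqrt{(x^2+y^2)^2 + 16a^2}}\,\mathbf{1}\{(x^2+y^2)^2 + 16a^2 < 1\}$ (with $\rho(0,0,a):=0$) is a probability density with respect to Lebesgue measure on $\mathbb{R}^3$: $\int_{\mathbb{R}^3} \rho(x,y,a)\,dx\,dy\,da = 1$. -/

import Mathlib

open MeasureTheory

/-- The density of the measure `ν` on the Heisenberg group with `δ₀ ≺ ν`. -/
noncomputable def heisDensity (p : ℝ × ℝ × ℝ) : ℝ :=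
  if (p.1 ^ 2 + p.2.1 ^ 2) ^ 2 + 16 * p.2.2 ^ 2 < 1 then
    (4 / Real.pi) * (p.1 ^ 2 + p.2.1 ^ 2) /
      Real.sqrt ((p.1 ^ 2 + p.2.1 ^ 2) ^ 2 + 16 * p.2.2 ^ 2)
  else 0

open Real Set

lemma heis_measurable : Measurable heisDensity := by
  unfold heisDensity
  apply Measurable.ite
  · exact measurableSet_lt (by fun_prop) measurable_const
  · fun_prop
  · exact measurable_const

lemma heis_nonneg (p : ℝ × ℝ × ℝ) : 0 ≤ heisDensity p := by
  unfold heisDensity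
  split
  · positivity
  · exact le_refl _

lemma heis_le (p : ℝ × ℝ × ℝ) : heisDensity p ≤ 4 / Real.pi := by
  have hpi : (0:ℝ) < 4 / Real.pi := by positivity
  unfold heisDensity
  split
  · set s := p.1 ^ 2 + p.2.1 ^ 2 with hs
    set D := s ^ 2 + 16 * p.2.2 ^ 2 with hD
    have hs0 : 0 ≤ s := by positivity
    have hD0 : 0 ≤ D := by positivity
    rcases eq_or_lt_of_le (Real.sqrt_nonneg D) with h | h
    · rw [← h, div_zero]; positivity
    · rw [div_le_iff₀ h]
      have hsle : s ≤ Real.sqrt D := by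
        rw [show s = Real.sqrt (s^2) by rw [Real.sqrt_sq hs0]]
        exact Real.sqrt_le_sqrt (by nlinarith [sq_nonneg p.2.2])
      calc 4 / Real.pi * s ≤ 4 / Real.pi * Real.sqrt D :=
            mul_le_mul_of_nonneg_left hsle hpi.le
        _ = 4 / Real.pi * Real.sqrt D := rfl
  · positivity

lemma heis_planar_integrable (a : ℝ) :
    Integrable (fun v : ℝ × ℝ => heisDensity (v.1, v.2, a)) := by
  have hmeas : Measurable (fun v : ℝ × ℝ => heisDensity (v.1, v.2, a)) := by
    exact heis_measurable.comp (by fun_prop)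
  set S : Set (ℝ × ℝ) := Ioo (-1:ℝ) 1 ×ˢ Ioo (-1:ℝ) 1 with hS
  have hSm : MeasurableSet S := (measurableSet_Ioo).prod measurableSet_Ioo
  have hSvol : volume S < ⊤ := by
    rw [hS, Measure.volume_eq_prod, Measure.prod_prod, Real.volume_Ioo]
    exact ENNReal.mul_lt_top ENNReal.ofReal_lt_top ENNReal.ofReal_lt_top
  refine Integrable.mono' (g := S.indicator fun _ => 4 / Real.pi)
    ?_ hmeas.aestronglyMeasurable ?_
  · exact (integrableOn_const hSvol.ne).integrable_indicator hSm
  · refine Filter.Eventually.of_forall fun v => ?_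
    rw [Real.norm_of_nonneg (heis_nonneg _)]
    by_cases hv : v ∈ S
    · rw [indicator_of_mem hv]; exact heis_le _
    · rw [indicator_of_notMem hv]
      -- outside S, density is 0
      have : ¬ ((v.1 ^ 2 + v.2 ^ 2) ^ 2 + 16 * a ^ 2 < 1) := by
        intro h
        apply hv
        have hs1 : v.1 ^ 2 + v.2 ^ 2 < 1 := by
          nlinarith [sq_nonneg (v.1 ^ 2 + v.2 ^ 2), sq_nonneg a,
            sq_nonneg (v.1 ^ 2 + v.2 ^ 2 - 1), sq_nonneg (v.1 ^ 2 + v.2 ^ 2 + 1)]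
        constructor
        · constructor <;> nlinarith [sq_nonneg v.2, sq_nonneg (v.1 + 1), sq_nonneg (v.1 - 1)]
        · constructor <;> nlinarith [sq_nonneg v.1, sq_nonneg (v.2 + 1), sq_nonneg (v.2 - 1)]
      simp only [heisDensity, this, if_false]
      exact le_refl _

lemma heis_radial (a : ℝ) (ha : a ≠ 0) :
    ∫ r in Ioi (0:ℝ),
        (if r ^ 4 + 16 * a ^ 2 < 1 then (4 / Real.pi) * r ^ 3 / Real.sqrt (r ^ 4 + 16 * a ^ 2)
          else 0)
      = (2 / Real.pi) * max (1 - 4 * |a|) 0 := by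
  have ha2 : 0 < 16 * a ^ 2 := by positivity
  by_cases h14 : |a| < 1/4
  · -- main case
    set c : ℝ := 1 - 16 * a ^ 2 with hc
    have hc0 : 0 < c := by
      have : a ^ 2 < 1/16 := by
        have := abs_nonneg a
        nlinarith [sq_abs a]
      simp only [hc]; nlinarith
    set R : ℝ := Real.sqrt (Real.sqrt c) with hR
    have hR0 : 0 < R := Real.sqrt_pos.2 (Real.sqrt_pos.2 hc0)
    have hR2 : R ^ 2 = Real.sqrt c := Real.sq_sqrt (Real.sqrt_nonneg c)
    have hR4 : R ^ 4 = c := by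
      have : R ^ 4 = (R ^ 2) ^ 2 := by ring
      rw [this, hR2, Real.sq_sqrt hc0.le]
    have hcond : ∀ r : ℝ, 0 < r → ((r ^ 4 + 16 * a ^ 2 < 1) ↔ r < R) := by
      intro r hr
      rw [hR, Real.lt_sqrt hr.le, Real.lt_sqrt (by positivity)]
      constructor
      · intro h; nlinarith
      · intro h; nlinarith
    set f : ℝ → ℝ := fun r => (4 / Real.pi) * r ^ 3 / Real.sqrt (r ^ 4 + 16 * a ^ 2) with hf
    have step1 : ∫ r in Ioi (0:ℝ),
        (if r ^ 4 + 16 * a ^ 2 < 1 then (4 / Real.pi) * r ^ 3 / Real.sqrt (r ^ 4 + 16 * a ^ 2)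
          else 0) = ∫ r in Ioi (0:ℝ), (Iio R).indicator f r := by
      apply setIntegral_congr_fun measurableSet_Ioi
      intro r hr
      simp only [mem_Ioi] at hr
      by_cases h : r < R
      · rw [indicator_of_mem (mem_Iio.2 h)]
        exact if_pos ((hcond r hr).2 h)
      · rw [indicator_of_notMem (by simpa using h)]
        exact if_neg (fun hh => h ((hcond r hr).1 hh))
    rw [step1, setIntegral_indicator measurableSet_Iio, Ioi_inter_Iio,
      ← integral_Ioc_eq_integral_Ioo, ← intervalIntegral.integral_of_le hR0.le]
    have key : ∀ r ∈ uIcc (0:ℝ) R,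
        HasDerivAt (fun r => (2 / Real.pi) * Real.sqrt (r ^ 4 + 16 * a ^ 2)) (f r) r := by
      intro r _
      have hu : HasDerivAt (fun r : ℝ => r ^ 4 + 16 * a ^ 2) (4 * r ^ 3) r := by
        simpa using (hasDerivAt_pow 4 r).add_const (16 * a ^ 2)
      have hune : r ^ 4 + 16 * a ^ 2 ≠ 0 := by positivity
      have hsq : HasDerivAt (fun r : ℝ => Real.sqrt (r ^ 4 + 16 * a ^ 2))
          (1 / (2 * Real.sqrt (r ^ 4 + 16 * a ^ 2)) * (4 * r ^ 3)) r :=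
        (Real.hasDerivAt_sqrt hune).comp r hu
      have := hsq.const_mul (2 / Real.pi)
      refine this.congr_deriv ?_
      have hsne : Real.sqrt (r ^ 4 + 16 * a ^ 2) ≠ 0 := by
        rw [Real.sqrt_ne_zero']; positivity
      rw [hf]
      field_simp
    have hcont : Continuous f := by
      apply Continuous.div (by fun_prop) (by fun_prop)
      intro r
      rw [Real.sqrt_ne_zero']; positivity
    rw [intervalIntegral.integral_eq_sub_of_hasDerivAt key (hcont.intervalIntegrable 0 R)]
    have h16 : Real.sqrt (16 * a ^ 2) = 4 * |a| := by
      rw [show (16:ℝ) * a ^ 2 = (4 * a) ^ 2 by ring, Real.sqrt_sq_eq_abs, abs_mul]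
      norm_num
    have hz : (0:ℝ) ^ 4 + 16 * a ^ 2 = 16 * a ^ 2 := by ring
    rw [hR4]
    have : c + 16 * a ^ 2 = 1 := by rw [hc]; ring
    rw [this, Real.sqrt_one, hz, h16]
    rw [max_eq_left (by nlinarith)]
    ring
  · -- |a| ≥ 1/4
    push_neg at h14
    have h1 : (1:ℝ) ≤ 16 * a ^ 2 := by
      nlinarith [sq_abs a, sq_nonneg (|a| - 1/4), abs_nonneg a]
    have hcond : ∀ r : ℝ, ¬ (r ^ 4 + 16 * a ^ 2 < 1) := by
      intro r h
      nlinarith [sq_nonneg (r ^ 2)]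
    simp only [hcond, if_false]
    rw [integral_zero, max_eq_right (by nlinarith [abs_nonneg a]), mul_zero]

lemma heis_planar_value (a : ℝ) (ha : a ≠ 0) :
    ∫ v : ℝ × ℝ, heisDensity (v.1, v.2, a) = 4 * max (1 - 4 * |a|) 0 := by
  rw [← integral_comp_polarCoord_symm (fun v : ℝ × ℝ => heisDensity (v.1, v.2, a))]
  have step1 : (∫ p in polarCoord.target,
        p.1 • heisDensity ((polarCoord.symm p).1, (polarCoord.symm p).2, a))
      = ∫ p in Ioi (0:ℝ) ×ˢ Ioo (-π) π,
        (if p.1 ^ 4 + 16 * a ^ 2 < 1 then (4 / Real.pi) * p.1 ^ 3 / Real.sqrt (p.1 ^ 4 + 16 * a ^ 2)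
          else 0) * (1:ℝ) := by
    rw [polarCoord_target]
    apply setIntegral_congr_fun (measurableSet_Ioi.prod measurableSet_Ioo)
    intro p _
    have hs : ((polarCoord.symm p).1) ^ 2 + ((polarCoord.symm p).2) ^ 2 = p.1 ^ 2 := by
      simp only [polarCoord_symm_apply]
      rw [mul_pow, mul_pow, ← mul_add, cos_sq_add_sin_sq, mul_one]
    simp only [heisDensity, hs, smul_eq_mul, mul_one]
    rw [show (p.1 ^ 2) ^ 2 = p.1 ^ 4 by ring]
    by_cases h : p.1 ^ 4 + 16 * a ^ 2 < 1
    · rw [if_pos h, if_pos h]; ring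
    · rw [if_neg h, if_neg h, mul_zero]
  rw [step1, Measure.volume_eq_prod, ← Measure.prod_restrict,
    integral_prod_mul (μ := volume.restrict (Ioi (0:ℝ))) (ν := volume.restrict (Ioo (-π) π))
      (f := fun r : ℝ => (if r ^ 4 + 16 * a ^ 2 < 1 then
        (4 / Real.pi) * r ^ 3 / Real.sqrt (r ^ 4 + 16 * a ^ 2) else 0))
      (g := fun _ : ℝ => (1:ℝ))]
  have hθ : ∫ θ in Ioo (-π) π, (1:ℝ) = 2 * π := by
    simp only [integral_const, Measure.restrict_apply, MeasurableSet.univ, univ_inter,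
      Real.volume_Ioo, smul_eq_mul, mul_one]
    rw [Measure.real, Measure.restrict_apply MeasurableSet.univ, univ_inter, Real.volume_Ioo,
      ENNReal.toReal_ofReal (by linarith [Real.pi_pos])]
    ring
  rw [hθ, heis_radial a ha]
  have hpi := Real.pi_ne_zero
  field_simp
  ring

lemma heis_outer : ∫ a : ℝ, 4 * max (1 - 4 * |a|) 0 = 1 := by
  have h : (fun a : ℝ => 4 * max (1 - 4 * |a|) 0)
      = (Icc (-(1/4):ℝ) (1/4)).indicator (fun a => 4 - 16 * |a|) := by
    funext a
    by_cases hmem : a ∈ Icc (-(1/4):ℝ) (1/4)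
    · rw [indicator_of_mem hmem]
      obtain ⟨h1, h2⟩ := hmem
      have habs : |a| ≤ 1/4 := abs_le.2 ⟨by linarith, h2⟩
      rw [max_eq_left (by linarith)]
      ring
    · rw [indicator_of_notMem hmem]
      have habs : 1/4 < |a| := by
        rcases not_and_or.1 hmem with h | h <;> push_neg at h
        · rw [abs_of_neg (by linarith)]; linarith
        · rw [abs_of_pos (by linarith)]; linarith
      rw [max_eq_right (by linarith), mul_zero]
  rw [h, integral_indicator measurableSet_Icc, integral_Icc_eq_integral_Ioc,
    ← intervalIntegral.integral_of_le (by norm_num : (-(1/4):ℝ) ≤ 1/4)]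
  have hcont : Continuous (fun a : ℝ => 4 - 16 * |a|) := by fun_prop
  rw [← intervalIntegral.integral_add_adjacent_intervals (a := (-(1/4):ℝ)) (b := 0) (c := 1/4)
    (hcont.intervalIntegrable _ _) (hcont.intervalIntegrable _ _)]
  have hleft : ∫ x in (-(1/4):ℝ)..0, (4 - 16 * |x|) = 1/2 := by
    have hcongr : ∫ x in (-(1/4):ℝ)..0, (4 - 16 * |x|) = ∫ x in (-(1/4):ℝ)..0, (4 + 16 * x) := by
      apply intervalIntegral.integral_congr
      intro x hx
      rw [uIcc_of_le (by norm_num)] at hx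
      show 4 - 16 * |x| = 4 + 16 * x
      rw [abs_of_nonpos hx.2]; ring
    rw [hcongr]
    have hd : ∀ x ∈ uIcc (-(1/4):ℝ) 0,
        HasDerivAt (fun x : ℝ => 4 * x + 8 * x ^ 2) (4 + 16 * x) x := by
      intro x _
      have h1 : HasDerivAt (fun x : ℝ => 4 * x) 4 x := by
        simpa using (hasDerivAt_id x).const_mul 4
      have h2 : HasDerivAt (fun x : ℝ => 8 * x ^ 2) (8 * (2 * x)) x := by
        simpa using (hasDerivAt_pow 2 x).const_mul 8
      exact (h1.add h2).congr_deriv (by ring)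
    rw [intervalIntegral.integral_eq_sub_of_hasDerivAt hd
      ((by fun_prop : Continuous fun x : ℝ => 4 + 16 * x).intervalIntegrable _ _)]
    norm_num
  have hright : ∫ x in (0:ℝ)..(1/4), (4 - 16 * |x|) = 1/2 := by
    have hcongr : ∫ x in (0:ℝ)..(1/4), (4 - 16 * |x|) = ∫ x in (0:ℝ)..(1/4), (4 - 16 * x) := by
      apply intervalIntegral.integral_congr
      intro x hx
      rw [uIcc_of_le (by norm_num)] at hx
      show 4 - 16 * |x| = 4 - 16 * x
      rw [abs_of_nonneg hx.1]
    rw [hcongr]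
    have hd : ∀ x ∈ uIcc (0:ℝ) (1/4),
        HasDerivAt (fun x : ℝ => 4 * x - 8 * x ^ 2) (4 - 16 * x) x := by
      intro x _
      have h1 : HasDerivAt (fun x : ℝ => 4 * x) 4 x := by
        simpa using (hasDerivAt_id x).const_mul 4
      have h2 : HasDerivAt (fun x : ℝ => 8 * x ^ 2) (8 * (2 * x)) x := by
        simpa using (hasDerivAt_pow 2 x).const_mul 8
      exact (h1.sub h2).congr_deriv (by ring)
    rw [intervalIntegral.integral_eq_sub_of_hasDerivAt hd
      ((by fun_prop : Continuous fun x : ℝ => 4 - 16 * x).intervalIntegrable _ _)]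
    norm_num
  rw [hleft, hright]; norm_num

theorem heisDensity_integral_eq_one : ∫ p : ℝ × ℝ × ℝ, heisDensity p = 1 := by
  set φ : ℝ × (ℝ × ℝ) ≃ᵐ ℝ × ℝ × ℝ :=
    (MeasurableEquiv.prodComm : ℝ × (ℝ × ℝ) ≃ᵐ (ℝ × ℝ) × ℝ).trans MeasurableEquiv.prodAssoc with hφ
  have hswap : MeasurePreserving (MeasurableEquiv.prodComm : ℝ × (ℝ × ℝ) ≃ᵐ (ℝ × ℝ) × ℝ)
      (volume : Measure (ℝ × (ℝ × ℝ))) (volume : Measure ((ℝ × ℝ) × ℝ)) := by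
    exact Measure.measurePreserving_swap
  have hφmp : MeasurePreserving φ (volume : Measure (ℝ × (ℝ × ℝ)))
      (volume : Measure (ℝ × ℝ × ℝ)) := by
    have hassoc : MeasurePreserving (MeasurableEquiv.prodAssoc : (ℝ × ℝ) × ℝ ≃ᵐ ℝ × ℝ × ℝ)
        (volume : Measure ((ℝ × ℝ) × ℝ)) (volume : Measure (ℝ × ℝ × ℝ)) := by
      have := MeasureTheory.measurePreserving_prodAssoc
        (volume : Measure ℝ) (volume : Measure ℝ) (volume : Measure ℝ)
      exact this
    exact hassoc.comp hswap
  have h0 : ∀ᵐ a : ℝ, a ≠ 0 := by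
    rw [ae_iff]
    simp only [not_ne_iff, setOf_eq_eq_singleton]
    exact measure_singleton 0
  have hmeasφ : AEStronglyMeasurable (fun q : ℝ × (ℝ × ℝ) => heisDensity (φ q))
      ((volume : Measure ℝ).prod (volume : Measure (ℝ × ℝ))) :=
    (heis_measurable.comp φ.measurable).aestronglyMeasurable.mono_measure
      (le_of_eq (Measure.volume_eq_prod ℝ (ℝ × ℝ)).symm)
  have hG : Integrable (fun a : ℝ => 4 * max (1 - 4 * |a|) 0) := by
    apply Continuous.integrable_of_hasCompactSupport
    · fun_prop
    · apply HasCompactSupport.intro (isCompact_Icc (a := -(1/4:ℝ)) (b := 1/4))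
      intro x hx
      have habs : 1/4 < |x| := by
        rcases not_and_or.1 hx with h | h <;> push_neg at h
        · rw [abs_of_neg (by linarith)]; linarith
        · rw [abs_of_pos (by linarith)]; linarith
      rw [max_eq_right (by linarith), mul_zero]
  have hnormeq : (fun a : ℝ => ∫ v : ℝ × ℝ, ‖heisDensity (v.1, v.2, a)‖)
      =ᵐ[volume] (fun a : ℝ => 4 * max (1 - 4 * |a|) 0) := by
    filter_upwards [h0] with a ha
    calc ∫ v : ℝ × ℝ, ‖heisDensity (v.1, v.2, a)‖
        = ∫ v : ℝ × ℝ, heisDensity (v.1, v.2, a) := by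
          apply integral_congr_ae
          filter_upwards with v
          exact Real.norm_of_nonneg (heis_nonneg _)
      _ = 4 * max (1 - 4 * |a|) 0 := heis_planar_value a ha
  have hint : Integrable (fun q : ℝ × (ℝ × ℝ) => heisDensity (φ q))
      ((volume : Measure ℝ).prod (volume : Measure (ℝ × ℝ))) := by
    refine (integrable_prod_iff hmeasφ).2 ⟨?_, ?_⟩
    · exact Filter.Eventually.of_forall fun a => heis_planar_integrable a
    · exact hG.congr hnormeq.symm
  calc ∫ p : ℝ × ℝ × ℝ, heisDensity p
      = ∫ q : ℝ × (ℝ × ℝ), heisDensity (φ q) := (hφmp.integral_comp φ.measurableEmbedding _).symm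
    _ = ∫ q : ℝ × (ℝ × ℝ), heisDensity (φ q)
          ∂((volume : Measure ℝ).prod (volume : Measure (ℝ × ℝ))) := by
        rw [← Measure.volume_eq_prod]
    _ = ∫ a : ℝ, ∫ v : ℝ × ℝ, heisDensity (v.1, v.2, a) := integral_prod _ hint
    _ = ∫ a : ℝ, 4 * max (1 - 4 * |a|) 0 := by
        apply integral_congr_ae
        filter_upwards [h0] with a ha
        exact heis_planar_value a ha
    _ = 1 := heis_outer
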